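/- arXiv:2404.10444 — 2 statements merged into one kernel-verified Lean document; each statement's English description precedes it below -/
import Mathlib

section
/- Let (Ω, d_Ω) be a metric space, μ a probability measure on Ω, (X, d_X) a metric space, β ∈ (0, 1], and ρ : X × Ω → [0, ∞) a jointly measurable family of μ-densities. Assume there are a measurable L : Ω → [0, ∞) and a constant C > 0 with |ρ(x₁, y) − ρ(x₂, y)| ≤ L(y) d_X(x₁, x₂)^β for μ-almost all y and all x₁, x₂ ∈ X, and ∫ L(y)² μ(dy) ≤ C². Define M(x, ω) = ∫ d_Ω(y, ω)² ρ(x, y) μ(dy) and H(ω₁, ω₂) = (∫ (d_Ω(y, ω₁) + d_Ω(y, ω₂))² μ(dy))^{1/2}. Then for all x₁, x₂ ∈ X and all ω₁, ω₂ ∈ Ω with H(ω₁, ω₂) < ∞ and all four values M(xⱼ, ωᵢ) finite, |(M(x₁, ω₁) − M(x₁, ω₂)) − (M(x₂, ω₁) − M(x₂, ω₂))| ≤ C · d_Ω(ω₁, ω₂) · H(ω₁, ω₂) · d_X(x₁, x₂)^β. -/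
open MeasureTheory

/-- Cauchy–Schwarz inequality for integrals of nonneg real functions. -/
lemma cauchy_schwarz_integral {α : Type*} [MeasurableSpace α] (μ : Measure α) (f g : α → ℝ)
    (hf : AEStronglyMeasurable f μ) (hg : AEStronglyMeasurable g μ)
    (hfn : ∀ y, 0 ≤ f y) (hgn : ∀ y, 0 ≤ g y)
    (hf2 : Integrable (fun y => f y ^ 2) μ) (hg2 : Integrable (fun y => g y ^ 2) μ) :
    ∫ y, f y * g y ∂μ ≤ Real.sqrt (∫ y, f y ^ 2 ∂μ) * Real.sqrt (∫ y, g y ^ 2 ∂μ) := by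
  have hf' : MemLp f 2 μ := (memLp_two_iff_integrable_sq hf).2 hf2
  have hg' : MemLp g 2 μ := (memLp_two_iff_integrable_sq hg).2 hg2
  have hpq : Real.HolderConjugate 2 2 := Real.HolderConjugate.two_two
  have hf'' : MemLp f (ENNReal.ofReal 2) μ := by
    rw [show ENNReal.ofReal 2 = 2 by norm_num]; exact hf'
  have hg'' : MemLp g (ENNReal.ofReal 2) μ := by
    rw [show ENNReal.ofReal 2 = 2 by norm_num]; exact hg'
  have h := integral_mul_norm_le_Lp_mul_Lq hpq hf'' hg''
  have e1 : ∀ y, ‖f y‖ * ‖g y‖ = f y * g y := fun y => by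
    rw [Real.norm_of_nonneg (hfn y), Real.norm_of_nonneg (hgn y)]
  have e2 : ∀ y, ‖f y‖ ^ (2 : ℝ) = f y ^ 2 := fun y => by
    rw [Real.norm_of_nonneg (hfn y), Real.rpow_two]
  have e3 : ∀ y, ‖g y‖ ^ (2 : ℝ) = g y ^ 2 := fun y => by
    rw [Real.norm_of_nonneg (hgn y), Real.rpow_two]
  simp only [e1, e2, e3] at h
  calc ∫ y, f y * g y ∂μ
      ≤ (∫ y, f y ^ 2 ∂μ) ^ (1 / 2 : ℝ) * (∫ y, g y ^ 2 ∂μ) ^ (1 / 2 : ℝ) := h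
    _ = Real.sqrt (∫ y, f y ^ 2 ∂μ) * Real.sqrt (∫ y, g y ^ 2 ∂μ) := by
        rw [Real.sqrt_eq_rpow, Real.sqrt_eq_rpow]

/-- Bias-control lemma: Hölder continuity (with square-integrable Hölder constant) of the
conditional densities `ρ(x, ·)` implies Hölder continuity in `x` of differences of the
Fréchet objective `M(x, ω) = ∫ d(y, ω)² ρ(x, y) μ(dy)`, with factor
`C · d(ω₁, ω₂) · H(ω₁, ω₂)` where `H(ω₁, ω₂) = (∫ (d(y,ω₁)+d(y,ω₂))² μ(dy))^{1/2}`. -/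
theorem stmt_5 {Ω X : Type*} [MetricSpace Ω] [MeasurableSpace Ω] [MetricSpace X]
    [MeasurableSpace X]
    (μ : Measure Ω) [IsProbabilityMeasure μ]
    (β : ℝ) (hβ0 : 0 < β) (hβ1 : β ≤ 1)
    (ρ : X → Ω → ℝ) (hρmeas : Measurable fun p : X × Ω => ρ p.1 p.2)
    (hρnonneg : ∀ x y, 0 ≤ ρ x y)
    (L : Ω → ℝ) (hLmeas : Measurable L) (hLnonneg : ∀ y, 0 ≤ L y)
    (C : ℝ) (hC : 0 < C)
    (hHolder : ∀ᵐ y ∂μ, ∀ x₁ x₂ : X, |ρ x₁ y - ρ x₂ y| ≤ L y * dist x₁ x₂ ^ β)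
    (hL2int : Integrable (fun y => L y ^ 2) μ)
    (hL2 : ∫ y, L y ^ 2 ∂μ ≤ C ^ 2)
    (M : X → Ω → ℝ) (hM : ∀ x ω, M x ω = ∫ y, dist y ω ^ 2 * ρ x y ∂μ)
    (Hf : Ω → Ω → ℝ)
    (hHf : ∀ ω₁ ω₂, Hf ω₁ ω₂ = Real.sqrt (∫ y, (dist y ω₁ + dist y ω₂) ^ 2 ∂μ))
    (x₁ x₂ : X) (ω₁ ω₂ : Ω)
    (hHfin : Integrable (fun y => (dist y ω₁ + dist y ω₂) ^ 2) μ)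
    (hMfin : ∀ x ∈ ({x₁, x₂} : Set X), ∀ ω ∈ ({ω₁, ω₂} : Set Ω),
      Integrable (fun y => dist y ω ^ 2 * ρ x y) μ) :
    |(M x₁ ω₁ - M x₁ ω₂) - (M x₂ ω₁ - M x₂ ω₂)| ≤
      C * dist ω₁ ω₂ * Hf ω₁ ω₂ * dist x₁ x₂ ^ β := by
  set f : Ω → ℝ := fun y => dist y ω₁ + dist y ω₂ with hfdef
  have hfnonneg : ∀ y, 0 ≤ f y := fun y => add_nonneg dist_nonneg dist_nonneg
  -- a.e.-measurability of f
  have hfmeas : AEStronglyMeasurable f μ := by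
    have h1 : AEStronglyMeasurable (fun y => Real.sqrt ((f y) ^ 2)) μ :=
      Real.continuous_sqrt.comp_aestronglyMeasurable hHfin.1
    refine h1.congr (Filter.Eventually.of_forall fun y => ?_)
    exact Real.sqrt_sq (hfnonneg y)
  -- integrability of the four pieces
  have h11 := hMfin x₁ (by simp) ω₁ (by simp)
  have h12 := hMfin x₁ (by simp) ω₂ (by simp)
  have h21 := hMfin x₂ (by simp) ω₁ (by simp)
  have h22 := hMfin x₂ (by simp) ω₂ (by simp)
  -- the difference as a single integral
  have hD : (M x₁ ω₁ - M x₁ ω₂) - (M x₂ ω₁ - M x₂ ω₂) =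
      ∫ y, (dist y ω₁ ^ 2 - dist y ω₂ ^ 2) * (ρ x₁ y - ρ x₂ y) ∂μ := by
    have hA : Integrable (fun y => dist y ω₁ ^ 2 * ρ x₁ y - dist y ω₂ ^ 2 * ρ x₁ y) μ :=
      h11.sub h12
    have hB : Integrable (fun y => dist y ω₁ ^ 2 * ρ x₂ y - dist y ω₂ ^ 2 * ρ x₂ y) μ :=
      h21.sub h22
    have key : ∫ y, (dist y ω₁ ^ 2 - dist y ω₂ ^ 2) * (ρ x₁ y - ρ x₂ y) ∂μ =
        ∫ y, (dist y ω₁ ^ 2 * ρ x₁ y - dist y ω₂ ^ 2 * ρ x₁ y) -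
          (dist y ω₁ ^ 2 * ρ x₂ y - dist y ω₂ ^ 2 * ρ x₂ y) ∂μ := by
      congr 1; ext y; ring
    rw [hM, hM, hM, hM, key, integral_sub hA hB, integral_sub h11 h12, integral_sub h21 h22]
  have hDint : Integrable
      (fun y => (dist y ω₁ ^ 2 - dist y ω₂ ^ 2) * (ρ x₁ y - ρ x₂ y)) μ := by
    have : (fun y => (dist y ω₁ ^ 2 - dist y ω₂ ^ 2) * (ρ x₁ y - ρ x₂ y)) =
        fun y => (dist y ω₁ ^ 2 * ρ x₁ y - dist y ω₂ ^ 2 * ρ x₁ y) -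
          (dist y ω₁ ^ 2 * ρ x₂ y - dist y ω₂ ^ 2 * ρ x₂ y) := by
      ext y; ring
    rw [this]
    exact (h11.sub h12).sub (h21.sub h22)
  -- integrability of f * L
  have hLmeas' : AEStronglyMeasurable L μ := hLmeas.aestronglyMeasurable
  have hfL2 : MemLp f 2 μ := (memLp_two_iff_integrable_sq hfmeas).2 hHfin
  have hLL2 : MemLp L 2 μ := (memLp_two_iff_integrable_sq hLmeas').2 hL2int
  have hfLint : Integrable (fun y => f y * L y) μ := by
    have : MemLp (L • f) 1 μ := hfL2.smul hLL2 (hpqr := ⟨by norm_num [ENNReal.inv_two_add_inv_two]⟩)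
    have h2 : Integrable (L • f) μ := memLp_one_iff_integrable.1 this
    refine h2.congr (Filter.Eventually.of_forall fun y => ?_)
    simp [mul_comm]
  -- Cauchy–Schwarz
  have hCS : ∫ y, f y * L y ∂μ ≤ Hf ω₁ ω₂ * C := by
    have h := cauchy_schwarz_integral μ f L hfmeas hLmeas' hfnonneg hLnonneg hHfin hL2int
    have hL2' : Real.sqrt (∫ y, L y ^ 2 ∂μ) ≤ C := by
      calc Real.sqrt (∫ y, L y ^ 2 ∂μ) ≤ Real.sqrt (C ^ 2) := Real.sqrt_le_sqrt hL2
        _ = C := Real.sqrt_sq hC.le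
    calc ∫ y, f y * L y ∂μ
        ≤ Real.sqrt (∫ y, f y ^ 2 ∂μ) * Real.sqrt (∫ y, L y ^ 2 ∂μ) := h
      _ ≤ Real.sqrt (∫ y, f y ^ 2 ∂μ) * C := by
          exact mul_le_mul_of_nonneg_left hL2' (Real.sqrt_nonneg _)
      _ = Hf ω₁ ω₂ * C := by rw [hHf]
  -- pointwise a.e. bound on the integrand
  have hptwise : ∀ᵐ y ∂μ,
      |(dist y ω₁ ^ 2 - dist y ω₂ ^ 2) * (ρ x₁ y - ρ x₂ y)| ≤
        dist ω₁ ω₂ * dist x₁ x₂ ^ β * (f y * L y) := by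
    filter_upwards [hHolder] with y hy
    have hd : |dist y ω₁ - dist y ω₂| ≤ dist ω₁ ω₂ := by
      rw [dist_comm y ω₁, dist_comm y ω₂]
      exact abs_dist_sub_le ω₁ ω₂ y
    have hsq : |dist y ω₁ ^ 2 - dist y ω₂ ^ 2| ≤ dist ω₁ ω₂ * f y := by
      have : dist y ω₁ ^ 2 - dist y ω₂ ^ 2 = (dist y ω₁ - dist y ω₂) * f y := by
        simp only [hfdef]; ring
      rw [this, abs_mul, abs_of_nonneg (hfnonneg y)]
      exact mul_le_mul_of_nonneg_right hd (hfnonneg y)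
    calc |(dist y ω₁ ^ 2 - dist y ω₂ ^ 2) * (ρ x₁ y - ρ x₂ y)|
        = |dist y ω₁ ^ 2 - dist y ω₂ ^ 2| * |ρ x₁ y - ρ x₂ y| := abs_mul _ _
      _ ≤ (dist ω₁ ω₂ * f y) * (L y * dist x₁ x₂ ^ β) :=
          mul_le_mul hsq (hy x₁ x₂) (abs_nonneg _)
            (mul_nonneg dist_nonneg (hfnonneg y))
      _ = dist ω₁ ω₂ * dist x₁ x₂ ^ β * (f y * L y) := by ring
  -- put it together
  rw [hD]
  calc |∫ y, (dist y ω₁ ^ 2 - dist y ω₂ ^ 2) * (ρ x₁ y - ρ x₂ y) ∂μ|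
      ≤ ∫ y, |(dist y ω₁ ^ 2 - dist y ω₂ ^ 2) * (ρ x₁ y - ρ x₂ y)| ∂μ := by
        simpa only [Real.norm_eq_abs] using
          norm_integral_le_integral_norm
            (fun y => (dist y ω₁ ^ 2 - dist y ω₂ ^ 2) * (ρ x₁ y - ρ x₂ y)) (μ := μ)
    _ ≤ ∫ y, dist ω₁ ω₂ * dist x₁ x₂ ^ β * (f y * L y) ∂μ := by
        refine integral_mono_ae hDint.abs ((hfLint.const_mul _)) hptwise
    _ = dist ω₁ ω₂ * dist x₁ x₂ ^ β * ∫ y, f y * L y ∂μ := by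
        rw [integral_const_mul]
    _ ≤ dist ω₁ ω₂ * dist x₁ x₂ ^ β * (Hf ω₁ ω₂ * C) := by
        refine mul_le_mul_of_nonneg_left hCS ?_
        exact mul_nonneg dist_nonneg (Real.rpow_nonneg dist_nonneg β)
    _ = C * dist ω₁ ω₂ * Hf ω₁ ω₂ * dist x₁ x₂ ^ β := by ring
end

section
/- Let E be a real normed vector space, K ⊆ E a convex set, S ⊆ K a finite set, and ε, r > 0 with 2ε < r. Assume every point of K is within distance ε of some point of S. For x, y ∈ E define the graph distance d_G(x, y) as the infimum (in [0, ∞], with infimum of the empty set equal to ∞) over all finite sequences x = x₀, x₁, …, x_l = y with xᵢ ∈ S for 0 < i < l and ‖xᵢ₊₁ − xᵢ‖ ≤ r for all i, of the path length Σᵢ ‖xᵢ₊₁ − xᵢ‖. Then for all x, y ∈ K, d_G(x, y) ≤ (1 + 4ε/(r − 2ε)) ‖x − y‖. -/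
open scoped ENNReal

/-- The shortest-path graph distance through a set `S` with connectivity radius `r`:
the infimum (in `[0,∞]`, with `sInf ∅ = ∞`) over all finite sequences
`x = x₀, x₁, …, x_l = y` whose interior points lie in `S` and whose consecutive points are
at distance at most `r`, of the total path length `Σᵢ ‖xᵢ₊₁ − xᵢ‖`. -/
noncomputable def graphDist {E : Type*} [MetricSpace E] (S : Set E) (r : ℝ) (x y : E) :
    ℝ≥0∞ :=
  sInf { c : ℝ≥0∞ | ∃ (l : ℕ) (f : ℕ → E), f 0 = x ∧ f l = y ∧
    (∀ i, 0 < i → i < l → f i ∈ S) ∧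
    (∀ i < l, dist (f i) (f (i + 1)) ≤ r) ∧
    c = ∑ i ∈ Finset.range l, ENNReal.ofReal (dist (f i) (f (i + 1))) }

/-- On a convex subset `K` of a normed space, if the finite set `S ⊆ K` is `ε`-dense in `K`
and `2ε < r`, then the shortest-path graph distance with radius `r` through `S` satisfies
`d_G(x, y) ≤ (1 + 4ε/(r − 2ε)) ‖x − y‖` for all `x, y ∈ K`. -/
theorem stmt_9 {E : Type*} [NormedAddCommGroup E] [NormedSpace ℝ E]
    (K : Set E) (hK : Convex ℝ K) (S : Set E) (hSK : S ⊆ K) (hS : S.Finite)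
    (ε r : ℝ) (hε : 0 < ε) (hr : 0 < r) (h2ε : 2 * ε < r)
    (hdense : ∀ x ∈ K, ∃ s ∈ S, dist x s ≤ ε) :
    ∀ x ∈ K, ∀ y ∈ K,
      graphDist S r x y ≤ ENNReal.ofReal ((1 + 4 * ε / (r - 2 * ε)) * ‖x - y‖) := by
  intro x hx y hy
  have hc0 : 0 < r - 2 * ε := by linarith
  have hfac : (0:ℝ) ≤ 4 * ε / (r - 2 * ε) := by positivity
  by_cases hD : ‖x - y‖ ≤ r
  · -- single edge
    have hmem : ENNReal.ofReal (dist x y) ∈ { c : ℝ≥0∞ | ∃ (l : ℕ) (f : ℕ → E), f 0 = x ∧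
        f l = y ∧ (∀ i, 0 < i → i < l → f i ∈ S) ∧
        (∀ i < l, dist (f i) (f (i + 1)) ≤ r) ∧
        c = ∑ i ∈ Finset.range l, ENNReal.ofReal (dist (f i) (f (i + 1))) } :=
      ⟨1, fun i => if i = 0 then x else y, by simp, by simp, by omega,
        by intro i hi; interval_cases i; simpa [dist_eq_norm] using hD, by simp⟩
    refine le_trans (sInf_le hmem) ?_
    apply ENNReal.ofReal_le_ofReal
    rw [dist_eq_norm]
    nlinarith [norm_nonneg (x - y)]
  · push_neg at hD
    set D := ‖x - y‖ with hDdef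
    have hD0 : 0 < D := lt_trans hr hD
    set n : ℕ := ⌈D / (r - 2 * ε)⌉₊ with hn
    have hq1 : 1 < D / (r - 2 * ε) := (one_lt_div hc0).2 (by linarith)
    have hn0 : 0 < n := Nat.ceil_pos.2 (by linarith)
    have hnR : (0:ℝ) < n := by exact_mod_cast hn0
    have hnq : D / (r - 2 * ε) ≤ (n : ℝ) := Nat.le_ceil _
    have hn2q : (n : ℝ) ≤ 2 * (D / (r - 2 * ε)) := by
      have := Nat.ceil_lt_add_one (le_of_lt (lt_trans one_pos hq1)) (a := D / (r - 2 * ε))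
      rw [← hn] at this
      linarith
    have hDn : D / n ≤ r - 2 * ε := by
      rw [div_le_iff₀ hnR]
      calc D = (D / (r - 2 * ε)) * (r - 2 * ε) := by field_simp
        _ ≤ (n : ℝ) * (r - 2 * ε) := by nlinarith
        _ = (r - 2 * ε) * n := by ring
    -- segment points
    set g : ℕ → E := fun i => x + ((i : ℝ) / n) • (y - x) with hg
    have hgK : ∀ i ≤ n, g i ∈ K := by
      intro i hi
      have ht0 : (0:ℝ) ≤ (i : ℝ) / n := by positivity
      have ht1 : (i : ℝ) / n ≤ 1 := by
        rw [div_le_one hnR]; exact_mod_cast hi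
      have : g i = (1 - (i : ℝ) / n) • x + ((i : ℝ) / n) • y := by
        simp only [hg]; module
      rw [this]
      exact hK hx hy (by linarith) ht0 (by ring)
    have hstep : ∀ i : ℕ, dist (g i) (g (i + 1)) = D / n := by
      intro i
      have : g i - g (i + 1) = ((1 : ℝ) / n) • (x - y) := by
        have hne : (n:ℝ) ≠ 0 := ne_of_gt hnR
        simp only [hg]
        push_cast
        match_scalars
        field_simp
        ring
        ring
      rw [dist_eq_norm, this, norm_smul]
      simp [abs_of_pos (by positivity : (0:ℝ) < 1 / (n:ℝ)), div_eq_mul_inv, hDdef, mul_comm]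
    -- selection of nearby sample point
    have hsel : ∀ z ∈ K, ∃ s, s ∈ S ∧ dist z s ≤ ε := by
      intro z hz; obtain ⟨s, hs, hds⟩ := hdense z hz; exact ⟨s, hs, hds⟩
    classical
    set f : ℕ → E := fun i =>
      if i = 0 then x else if h : i < n ∧ (g i) ∈ K then (hsel _ h.2).choose else y with hf
    have hf0 : f 0 = x := by simp [hf]
    have hne0 : n ≠ 0 := hn0.ne'
    have hfn : f n = y := by
      simp only [hf]
      rw [if_neg hne0, dif_neg (by simp)]
    have hfS : ∀ i, 0 < i → i < n → f i ∈ S := by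
      intro i hi hi'
      have hKi : g i ∈ K := hgK i (le_of_lt hi')
      have heq : f i = (hsel _ hKi).choose := by
        simp only [hf]
        rw [if_neg hi.ne', dif_pos ⟨hi', hKi⟩]
      rw [heq]
      exact (hsel _ hKi).choose_spec.1
    have hfg : ∀ i ≤ n, dist (f i) (g i) ≤ ε := by
      intro i hi
      rcases Nat.eq_zero_or_pos i with h0 | h0
      · subst h0
        have : g 0 = x := by simp [hg]
        simp [hf0, this, le_of_lt hε]
      rcases eq_or_lt_of_le hi with h1 | h1
      · subst h1
        have : g n = y := by
          simp only [hg]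
          rw [div_self (ne_of_gt hnR), one_smul]
          abel
        simp [hfn, this, le_of_lt hε]
      · have hKi : g i ∈ K := hgK i hi
        have : f i = (hsel _ hKi).choose := by
          simp only [hf]
          rw [if_neg h0.ne', dif_pos ⟨h1, hKi⟩]
        rw [this, dist_comm]
        exact (hsel _ hKi).choose_spec.2
    have hedge : ∀ i < n, dist (f i) (f (i + 1)) ≤ D / n + 2 * ε := by
      intro i hi
      have h1 : dist (f i) (f (i + 1)) ≤
          dist (f i) (g i) + dist (g i) (g (i + 1)) + dist (g (i + 1)) (f (i + 1)) :=
        dist_triangle4 _ _ _ _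
      have h2 := hfg i (le_of_lt hi)
      have h3 := hfg (i + 1) hi
      rw [dist_comm (g (i+1))] at h1
      rw [hstep i] at h1
      linarith
    refine le_trans (sInf_le ⟨n, f, hf0, hfn, hfS, ?_, rfl⟩) ?_
    · intro i hi
      have := hedge i hi
      linarith [hDn]
    · rw [← ENNReal.ofReal_sum_of_nonneg (fun i _ => dist_nonneg)]
      apply ENNReal.ofReal_le_ofReal
      calc ∑ i ∈ Finset.range n, dist (f i) (f (i + 1))
          ≤ ∑ _i ∈ Finset.range n, (D / n + 2 * ε) :=
            Finset.sum_le_sum fun i hi => hedge i (Finset.mem_range.mp hi)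
        _ = n * (D / n + 2 * ε) := by rw [Finset.sum_const]; simp [mul_comm]; ring
        _ = D + 2 * ε * n := by
            have h5 : (n:ℝ) * (D / n) = D := by field_simp
            rw [mul_add, h5]; ring
        _ ≤ (1 + 4 * ε / (r - 2 * ε)) * D := by
            have : 2 * ε * (n : ℝ) ≤ 4 * ε * (D / (r - 2 * ε)) := by nlinarith
            have h2 : 4 * ε * (D / (r - 2 * ε)) = 4 * ε / (r - 2 * ε) * D := by ring
            nlinarith
end
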